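/- Let P₁ and P₂ be finite partially ordered sets and let r ∈ ℕ. The set N_{≤r} = { ∑_{i=1}^r a_i b_iᵀ : a_i ∈ C(P₁), b_i ∈ C(P₂) } of matrices admitting an ND factorization with at most r terms is a closed subset of ℝ^{P₁×P₂}. -/

import Mathlib

open Filter Topology

/-- The order cone of a finite poset: nonnegative, nondecreasing real-valued functions. -/
def orderCone (P : Type*) [PartialOrder P] : Set (P → ℝ) :=
  {f | (∀ x, 0 ≤ f x) ∧ ∀ ⦃x y : P⦄, x ≤ y → f x ≤ f y}

/-- the set of matrices admitting an ND factorization with at most `r`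
terms is closed. -/
theorem NDrank_le_r_isClosed
    (P₁ P₂ : Type*) [Fintype P₁] [Fintype P₂] [PartialOrder P₁] [PartialOrder P₂]
    (r : ℕ) :
    IsClosed {T : P₁ → P₂ → ℝ | ∃ (a : Fin r → P₁ → ℝ) (b : Fin r → P₂ → ℝ),
      (∀ i, a i ∈ orderCone P₁) ∧ (∀ i, b i ∈ orderCone P₂) ∧
      ∀ x y, T x y = ∑ i, a i x * b i y} := by
  by_cases hP1 : Nonempty P₁
  case neg =>
    haveI : IsEmpty P₁ := not_nonempty_iff.mp hP1
    haveI : Subsingleton (P₁ → P₂ → ℝ) := ⟨fun f g => funext fun x => (IsEmpty.false x).elim⟩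
    haveI : Finite (P₁ → P₂ → ℝ) := Finite.of_subsingleton
    exact (Set.toFinite _).isClosed
  haveI := hP1
  apply IsSeqClosed.isClosed
  intro f T hf hT
  choose a b ha hb hfab using hf
  -- the max of a n i
  set M : ℕ → Fin r → ℝ := fun n i => Finset.univ.sup' Finset.univ_nonempty (a n i) with hM
  have hM0 : ∀ n i, 0 ≤ M n i := by
    intro n i
    obtain ⟨x⟩ := hP1
    exact le_trans ((ha n i).1 x) (Finset.le_sup' _ (Finset.mem_univ x))
  have haM : ∀ n i x, a n i x ≤ M n i := fun n i x => Finset.le_sup' _ (Finset.mem_univ x)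
  have hMex : ∀ n i, ∃ x, a n i x = M n i := by
    intro n i
    obtain ⟨x, -, hx⟩ := Finset.exists_mem_eq_sup' (Finset.univ_nonempty (α := P₁)) (a n i)
    exact ⟨x, hx.symm⟩
  -- normalized factors
  set a' : ℕ → Fin r → P₁ → ℝ := fun n i x => a n i x / M n i with ha'
  set b' : ℕ → Fin r → P₂ → ℝ := fun n i y => b n i y * M n i with hb'
  have ha0 : ∀ n i x, M n i = 0 → a n i x = 0 := by
    intro n i x h
    exact le_antisymm (h ▸ haM n i x) ((ha n i).1 x)
  have hprod : ∀ n i x y, a' n i x * b' n i y = a n i x * b n i y := by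
    intro n i x y
    rcases eq_or_lt_of_le (hM0 n i) with h | h
    · simp [ha', hb', ← h, ha0 n i x h.symm]
    · simp only [ha', hb']; rw [div_mul_eq_mul_div, div_eq_iff (ne_of_gt h)]
      ring
  have hsum : ∀ n x y, f n x y = ∑ i, a' n i x * b' n i y := by
    intro n x y
    rw [hfab n x y]
    exact Finset.sum_congr rfl fun i _ => (hprod n i x y).symm
  -- bounds on a'
  have ha'0 : ∀ n i x, 0 ≤ a' n i x := fun n i x => div_nonneg ((ha n i).1 x) (hM0 n i)
  have ha'1 : ∀ n i x, a' n i x ≤ 1 := by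
    intro n i x
    rcases eq_or_lt_of_le (hM0 n i) with h | h
    · simp [ha', ← h]
    · exact (div_le_one h).mpr (haM n i x)
  have hb'0 : ∀ n i y, 0 ≤ b' n i y := fun n i y => mul_nonneg ((hb n i).1 y) (hM0 n i)
  -- nonnegativity of f n
  have hf0 : ∀ n x y, 0 ≤ f n x y := by
    intro n x y
    rw [hsum n x y]
    exact Finset.sum_nonneg fun i _ => mul_nonneg (ha'0 n i x) (hb'0 n i y)
  -- bound on the entries of f n
  have hc : ∀ x y, ∃ c, ∀ n, f n x y ≤ c := by
    intro x y
    have h1 : Filter.Tendsto (fun n => f n x y) atTop (𝓝 (T x y)) :=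
      tendsto_pi_nhds.mp (tendsto_pi_nhds.mp hT x) y
    obtain ⟨c, hc⟩ := h1.bddAbove_range
    exact ⟨c, fun n => hc (Set.mem_range_self n)⟩
  choose c hcf using hc
  set D : P₂ → ℝ := fun y => max 0 (Finset.univ.sup' Finset.univ_nonempty (fun x => c x y))
    with hD
  have hb'D : ∀ n i y, b' n i y ≤ D y := by
    intro n i y
    rcases eq_or_lt_of_le (hM0 n i) with h | h
    · simp [hb', ← h, hD]
    · obtain ⟨x₀, hx₀⟩ := hMex n i
      have h1 : a' n i x₀ = 1 := by
        simp [ha', hx₀, div_self (ne_of_gt h)]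
      calc b' n i y = a' n i x₀ * b' n i y := by rw [h1, one_mul]
        _ ≤ ∑ j, a' n j x₀ * b' n j y :=
            Finset.single_le_sum (fun j _ => mul_nonneg (ha'0 n j x₀) (hb'0 n j y))
              (Finset.mem_univ i)
        _ = f n x₀ y := (hsum n x₀ y).symm
        _ ≤ c x₀ y := hcf x₀ y n
        _ ≤ Finset.univ.sup' Finset.univ_nonempty (fun x => c x y) :=
            Finset.le_sup' (fun x => c x y) (Finset.mem_univ x₀)
        _ ≤ D y := le_max_right _ _
  -- compactness
  set K : Set ((Fin r → P₁ → ℝ) × (Fin r → P₂ → ℝ)) :=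
    (Set.univ.pi fun _ => Set.univ.pi fun _ => Set.Icc (0:ℝ) 1) ×ˢ
    (Set.univ.pi fun _ => Set.univ.pi fun y => Set.Icc (0:ℝ) (D y)) with hK
  have hKc : IsCompact K :=
    (isCompact_univ_pi fun _ => isCompact_univ_pi fun _ => isCompact_Icc).prod
      (isCompact_univ_pi fun _ => isCompact_univ_pi fun _ => isCompact_Icc)
  have hmem : ∀ n, (a' n, b' n) ∈ K := by
    intro n
    constructor
    · intro i _
      intro x _
      exact ⟨ha'0 n i x, ha'1 n i x⟩
    · intro i _
      intro y _
      exact ⟨hb'0 n i y, hb'D n i y⟩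
  obtain ⟨⟨A, B⟩, -, φ, hφ, hABt⟩ := hKc.tendsto_subseq hmem
  have hAt : Filter.Tendsto (fun k => a' (φ k)) atTop (𝓝 A) :=
    (continuous_fst.tendsto _).comp hABt
  have hBt : Filter.Tendsto (fun k => b' (φ k)) atTop (𝓝 B) :=
    (continuous_snd.tendsto _).comp hABt
  have hA : ∀ i x, Filter.Tendsto (fun k => a' (φ k) i x) atTop (𝓝 (A i x)) :=
    fun i x => tendsto_pi_nhds.mp (tendsto_pi_nhds.mp hAt i) x
  have hB : ∀ i y, Filter.Tendsto (fun k => b' (φ k) i y) atTop (𝓝 (B i y)) :=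
    fun i y => tendsto_pi_nhds.mp (tendsto_pi_nhds.mp hBt i) y
  refine ⟨A, B, ?_, ?_, ?_⟩
  · intro i
    refine ⟨fun x => ge_of_tendsto' (hA i x) fun k => ha'0 (φ k) i x, fun x y hxy => ?_⟩
    refine le_of_tendsto_of_tendsto' (hA i x) (hA i y) fun k => ?_
    rcases eq_or_lt_of_le (hM0 (φ k) i) with h | h
    · simp [ha', ← h]
    · exact (div_le_div_iff_of_pos_right h).mpr ((ha (φ k) i).2 hxy)
  · intro i
    refine ⟨fun y => ge_of_tendsto' (hB i y) fun k => hb'0 (φ k) i y, fun x y hxy => ?_⟩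
    exact le_of_tendsto_of_tendsto' (hB i x) (hB i y) fun k =>
      mul_le_mul_of_nonneg_right ((hb (φ k) i).2 hxy) (hM0 (φ k) i)
  · intro x y
    have h1 : Filter.Tendsto (fun k => f (φ k) x y) atTop (𝓝 (T x y)) :=
      (tendsto_pi_nhds.mp (tendsto_pi_nhds.mp hT x) y).comp hφ.tendsto_atTop
    have h2 : Filter.Tendsto (fun k => f (φ k) x y) atTop (𝓝 (∑ i, A i x * B i y)) := by
      have : ∀ k, f (φ k) x y = ∑ i, a' (φ k) i x * b' (φ k) i y := fun k => hsum (φ k) x y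
      simp only [this]
      exact tendsto_finset_sum _ fun i _ => (hA i x).mul (hB i y)
    exact tendsto_nhds_unique h1 h2
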